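/- (Information monotonically good for all welfare weights.) In the binary monopoly model with D_L and D_H three times continuously differentiable, suppose that for every p ∈ (p_L*, p_H*): R_L'''(p) ≤ 0, R_H'''(p) ≤ 0, D_L(p) ≥ D_H(p), and R_H''(p) ≤ R_L''(p). Then for every α ∈ (0,1], the value function W^α is convex on [0,1]. -/

import Mathlib

set_option maxHeartbeats 2000000 in
/-- (Information monotonically good for all welfare weights.) In the binary
monopoly model with `D_L, D_H` three times continuously differentiable, if on `(p_L*, p_H*)`
the marginal revenue curves are concave (`R_i''' ≤ 0`), the more elastic demand has a higher
level (`D_L ≥ D_H`) and a less concave revenue curve (`R_H'' ≤ R_L''`), then for every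
`α ∈ (0,1]` the value function `W^α` is convex on `[0,1]`. -/
theorem stmt_6
    (I : Set ℝ) (DL DH RL RH : ℝ → ℝ) (pLs pHs : ℝ)
    (hIopen : IsOpen I) (hIconv : Convex ℝ I) (hIpos : I ⊆ Set.Ioi (0:ℝ))
    (hRL : RL = fun q => q * DL q) (hRH : RH = fun q => q * DH q)
    (hDL : ContDiffOn ℝ 3 DL I) (hDH : ContDiffOn ℝ 3 DH I)
    (hDLpos : ∀ q ∈ I, 0 < DL q) (hDHpos : ∀ q ∈ I, 0 < DH q)
    (hDL' : ∀ q ∈ I, deriv DL q < 0) (hDH' : ∀ q ∈ I, deriv DH q < 0)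
    (hRL'' : ∀ q ∈ I, deriv (deriv RL) q < 0) (hRH'' : ∀ q ∈ I, deriv (deriv RH) q < 0)
    (hpLs : pLs ∈ I) (hpHs : pHs ∈ I) (hlt : pLs < pHs)
    (hRL' : deriv RL pLs = 0) (hRH' : deriv RH pHs = 0)
    (p : ℝ → ℝ)
    (hp : ∀ μ ∈ Set.Icc (0:ℝ) 1, p μ ∈ Set.Icc pLs pHs ∧
      (1 - μ) * deriv RL (p μ) + μ * deriv RH (p μ) = 0)
    (CSL CSH : ℝ → ℝ)
    (hCSL : ∀ q ∈ I, HasDerivAt CSL (-(DL q)) q)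
    (hCSH : ∀ q ∈ I, HasDerivAt CSH (-(DH q)) q)
    (W : ℝ → ℝ → ℝ)
    (hW : ∀ α : ℝ, W α = fun μ =>
      (1 - μ) * (α * CSL (p μ) + (1 - α) * RL (p μ)) +
        μ * (α * CSH (p μ) + (1 - α) * RH (p μ)))
    (hRL''' : ∀ q ∈ Set.Ioo pLs pHs, deriv (deriv (deriv RL)) q ≤ 0)
    (hRH''' : ∀ q ∈ Set.Ioo pLs pHs, deriv (deriv (deriv RH)) q ≤ 0)
    (hlevel : ∀ q ∈ Set.Ioo pLs pHs, DH q ≤ DL q)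
    (hcurv : ∀ q ∈ Set.Ioo pLs pHs, deriv (deriv RH) q ≤ deriv (deriv RL) q) :
    ∀ α ∈ Set.Ioc (0:ℝ) 1, ConvexOn ℝ (Set.Icc (0:ℝ) 1) (W α) := by
  intro α hα
  obtain ⟨hα0, hα1⟩ := hα
  -- basic set facts
  have hIcc : Set.Icc pLs pHs ⊆ I := hIconv.ordConnected.out hpLs hpHs
  have hqpos : ∀ q ∈ Set.Icc pLs pHs, (0:ℝ) < q := fun q hq => hIpos (hIcc hq)
  have hioo : ∀ x ∈ Set.Ioo pLs pHs, x ∈ Set.Icc pLs pHs := fun x hx => Set.Ioo_subset_Icc_self hx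
  -- smoothness package
  have hDLd : ∀ q ∈ I, HasDerivAt DL (deriv DL q) q := fun q hq =>
    ((hDL.differentiableOn (by norm_num)).differentiableAt (hIopen.mem_nhds hq)).hasDerivAt
  have hDHd : ∀ q ∈ I, HasDerivAt DH (deriv DH q) q := fun q hq =>
    ((hDH.differentiableOn (by norm_num)).differentiableAt (hIopen.mem_nhds hq)).hasDerivAt
  have hRLC3 : ContDiffOn ℝ 3 RL I := by
    rw [hRL]; exact (contDiff_id.contDiffOn).mul hDL
  have hRHC3 : ContDiffOn ℝ 3 RH I := by
    rw [hRH]; exact (contDiff_id.contDiffOn).mul hDH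
  have hRL1C2 : ContDiffOn ℝ 2 (deriv RL) I := hRLC3.deriv_of_isOpen hIopen (by norm_num)
  have hRH1C2 : ContDiffOn ℝ 2 (deriv RH) I := hRHC3.deriv_of_isOpen hIopen (by norm_num)
  have hRL2C1 : ContDiffOn ℝ 1 (deriv (deriv RL)) I := hRL1C2.deriv_of_isOpen hIopen (by norm_num)
  have hRH2C1 : ContDiffOn ℝ 1 (deriv (deriv RH)) I := hRH1C2.deriv_of_isOpen hIopen (by norm_num)
  have hRL1d : ∀ q ∈ I, HasDerivAt (deriv RL) (deriv (deriv RL) q) q := fun q hq =>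
    ((hRL1C2.differentiableOn (by norm_num)).differentiableAt (hIopen.mem_nhds hq)).hasDerivAt
  have hRH1d : ∀ q ∈ I, HasDerivAt (deriv RH) (deriv (deriv RH) q) q := fun q hq =>
    ((hRH1C2.differentiableOn (by norm_num)).differentiableAt (hIopen.mem_nhds hq)).hasDerivAt
  have hRL2d : ∀ q ∈ I, HasDerivAt (deriv (deriv RL)) (deriv (deriv (deriv RL)) q) q := fun q hq =>
    ((hRL2C1.differentiableOn (by norm_num)).differentiableAt (hIopen.mem_nhds hq)).hasDerivAt
  have hRH2d : ∀ q ∈ I, HasDerivAt (deriv (deriv RH)) (deriv (deriv (deriv RH)) q) q := fun q hq =>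
    ((hRH2C1.differentiableOn (by norm_num)).differentiableAt (hIopen.mem_nhds hq)).hasDerivAt
  have hRLd : ∀ q ∈ I, HasDerivAt RL (DL q + q * deriv DL q) q := by
    intro q hq
    have := (hasDerivAt_id q).mul (hDLd q hq)
    rw [hRL]; exact this.congr_deriv (by simp)
  have hRHd : ∀ q ∈ I, HasDerivAt RH (DH q + q * deriv DH q) q := by
    intro q hq
    have := (hasDerivAt_id q).mul (hDHd q hq)
    rw [hRH]; exact this.congr_deriv (by simp)
  have hRLd' : ∀ q ∈ I, HasDerivAt RL (deriv RL q) q := fun q hq =>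
    ((hRLC3.differentiableOn (by norm_num)).differentiableAt (hIopen.mem_nhds hq)).hasDerivAt
  have hRHd' : ∀ q ∈ I, HasDerivAt RH (deriv RH q) q := fun q hq =>
    ((hRHC3.differentiableOn (by norm_num)).differentiableAt (hIopen.mem_nhds hq)).hasDerivAt
  have hRL1 : ∀ q ∈ I, deriv RL q = DL q + q * deriv DL q := fun q hq => (hRLd q hq).deriv
  have hRH1 : ∀ q ∈ I, deriv RH q = DH q + q * deriv DH q := fun q hq => (hRHd q hq).deriv
  -- monotonicity of marginal revenues
  have hRL1anti : StrictAntiOn (deriv RL) (Set.Icc pLs pHs) := by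
    apply strictAntiOn_of_deriv_neg (convex_Icc _ _) ((hRL1C2.continuousOn).mono hIcc)
    intro x hx
    rw [interior_Icc] at hx
    exact hRL'' x (hIcc (hioo x hx))
  have hRH1anti : StrictAntiOn (deriv RH) (Set.Icc pLs pHs) := by
    apply strictAntiOn_of_deriv_neg (convex_Icc _ _) ((hRH1C2.continuousOn).mono hIcc)
    intro x hx
    rw [interior_Icc] at hx
    exact hRH'' x (hIcc (hioo x hx))
  have hmemL : pLs ∈ Set.Icc pLs pHs := Set.left_mem_Icc.2 hlt.le
  have hmemH : pHs ∈ Set.Icc pLs pHs := Set.right_mem_Icc.2 hlt.le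
  have hRL1neg : ∀ q ∈ Set.Icc pLs pHs, pLs < q → deriv RL q < 0 := by
    intro q hq h
    have := hRL1anti hmemL hq h
    rwa [hRL'] at this
  have hRL1nonpos : ∀ q ∈ Set.Icc pLs pHs, deriv RL q ≤ 0 := by
    intro q hq
    rcases eq_or_lt_of_le hq.1 with h | h
    · rw [← h, hRL']
    · exact (hRL1neg q hq h).le
  have hRH1pos : ∀ q ∈ Set.Icc pLs pHs, q < pHs → 0 < deriv RH q := by
    intro q hq h
    have := hRH1anti hq hmemH h
    rwa [hRH'] at this
  have hRH1nonneg : ∀ q ∈ Set.Icc pLs pHs, 0 ≤ deriv RH q := by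
    intro q hq
    rcases eq_or_lt_of_le hq.2 with h | h
    · rw [h, hRH']
    · exact (hRH1pos q hq h).le
  -- positivity of g and N, nonnegativity of M
  have hgpos : ∀ q ∈ Set.Icc pLs pHs, 0 < deriv RH q - deriv RL q := by
    intro q hq
    rcases eq_or_lt_of_le hq.1 with h | h
    · rw [← h, hRL']
      have := hRH1pos pLs hmemL hlt
      linarith
    · have h1 := hRL1neg q hq h
      have h2 := hRH1nonneg q hq
      linarith
  have hNpos : ∀ q ∈ Set.Icc pLs pHs,
      0 < deriv RL q * deriv (deriv RH) q - deriv RH q * deriv (deriv RL) q := by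
    intro q hq
    have h2H := hRH'' q (hIcc hq)
    have h2L := hRL'' q (hIcc hq)
    rcases eq_or_lt_of_le hq.1 with h | h
    · rw [← h, hRL']
      have hpos := hRH1pos pLs hmemL hlt
      have h2L' := hRL'' pLs hpLs
      nlinarith
    · have h1 := hRL1neg q hq h
      have h2 := hRH1nonneg q hq
      nlinarith
  have hMnonneg : ∀ q ∈ Set.Icc pLs pHs,
      0 ≤ deriv RH q * DL q - deriv RL q * DH q := by
    intro q hq
    have := hRH1nonneg q hq
    have := hRL1nonpos q hq
    have := hDLpos q (hIcc hq)
    have := hDHpos q (hIcc hq)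
    nlinarith
  -- the belief function m
  set m : ℝ → ℝ := fun q => -(deriv RL q) / (deriv RH q - deriv RL q) with hmdef
  have hmp : ∀ μ ∈ Set.Icc (0:ℝ) 1, m (p μ) = μ := by
    intro μ hμ
    obtain ⟨hmem, hFOC⟩ := hp μ hμ
    have hg := (hgpos _ hmem).ne'
    show -(deriv RL (p μ)) / (deriv RH (p μ) - deriv RL (p μ)) = μ
    rw [div_eq_iff hg]
    linear_combination -hFOC
  have hmd : ∀ q ∈ Set.Icc pLs pHs,
      HasDerivAt m ((deriv RL q * deriv (deriv RH) q - deriv RH q * deriv (deriv RL) q) /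
        (deriv RH q - deriv RL q) ^ 2) q := by
    intro q hq
    have hg := (hgpos q hq).ne'
    have hd : HasDerivAt (fun q => deriv RH q - deriv RL q)
        (deriv (deriv RH) q - deriv (deriv RL) q) q :=
      (hRH1d q (hIcc hq)).sub (hRL1d q (hIcc hq))
    have h := ((hRL1d q (hIcc hq)).neg).div hd hg
    refine h.congr_deriv ?_
    simp only [Pi.neg_apply]
    field_simp
    ring
  have hmcont : ContinuousOn m (Set.Icc pLs pHs) := fun q hq =>
    (hmd q hq).continuousAt.continuousWithinAt
  have hmmono : StrictMonoOn m (Set.Icc pLs pHs) := by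
    apply strictMonoOn_of_deriv_pos (convex_Icc _ _) hmcont
    intro x hx
    rw [interior_Icc] at hx
    have hx' := hioo x hx
    rw [(hmd x hx').deriv]
    exact div_pos (hNpos x hx') (pow_pos (hgpos x hx') 2)
  have hm0 : m pLs = 0 := by
    show -(deriv RL pLs) / (deriv RH pLs - deriv RL pLs) = 0
    rw [hRL']
    simp
  have hm1 : m pHs = 1 := by
    show -(deriv RL pHs) / (deriv RH pHs - deriv RL pHs) = 1
    have hne : deriv RL pHs ≠ 0 := (hRL1neg pHs hmemH hlt).ne
    rw [hRH', zero_sub, neg_div_neg_eq, div_self hne]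
  have hmmem : ∀ q ∈ Set.Icc pLs pHs, m q ∈ Set.Icc (0:ℝ) 1 := by
    intro q hq
    constructor
    · rw [← hm0]; exact (hmmono.monotoneOn) hmemL hq hq.1
    · rw [← hm1]; exact (hmmono.monotoneOn) hq hmemH hq.2
  -- p as the inverse of m
  have hpmem : ∀ μ ∈ Set.Icc (0:ℝ) 1, p μ ∈ Set.Icc pLs pHs := fun μ hμ => (hp μ hμ).1
  have hpmono : MonotoneOn p (Set.Icc (0:ℝ) 1) := by
    intro μ1 h1 μ2 h2 h12
    by_contra h
    push_neg at h
    have := hmmono (hpmem μ2 h2) (hpmem μ1 h1) h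
    rw [hmp μ1 h1, hmp μ2 h2] at this
    linarith
  have hpm : ∀ q ∈ Set.Icc pLs pHs, p (m q) = q := by
    intro q hq
    have h1 := hmp (m q) (hmmem q hq)
    exact hmmono.injOn (hpmem (m q) (hmmem q hq)) hq h1
  have hp0 : p 0 = pLs := by
    have h : m (p 0) = m pLs := by rw [hm0]; exact hmp 0 (Set.left_mem_Icc.2 zero_le_one)
    exact hmmono.injOn (hpmem 0 (Set.left_mem_Icc.2 zero_le_one)) hmemL h
  have hp1 : p 1 = pHs := by
    have h : m (p 1) = m pHs := by rw [hm1]; exact hmp 1 (Set.right_mem_Icc.2 zero_le_one)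
    exact hmmono.injOn (hpmem 1 (Set.right_mem_Icc.2 zero_le_one)) hmemH h
  have himage : p '' Set.Icc (0:ℝ) 1 = Set.Icc pLs pHs := by
    apply Set.Subset.antisymm
    · rintro _ ⟨μ, hμ, rfl⟩
      exact hpmem μ hμ
    · intro q hq
      exact ⟨m q, hmmem q hq, hpm q hq⟩
  have hpinterior : ∀ μ ∈ Set.Ioo (0:ℝ) 1, p μ ∈ Set.Ioo pLs pHs := by
    intro μ hμ
    have hμ' := Set.Ioo_subset_Icc_self hμ
    have hmem := hpmem μ hμ'
    rcases eq_or_lt_of_le hmem.1 with h | h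
    · exfalso
      have h2 := hmp μ hμ'
      rw [← h, hm0] at h2
      linarith [hμ.1]
    rcases eq_or_lt_of_le hmem.2 with h2 | h2
    · exfalso
      have h3 := hmp μ hμ'
      rw [h2, hm1] at h3
      linarith [hμ.2]
    exact ⟨h, h2⟩
  -- continuity of p
  have hpcont : ContinuousOn p (Set.Icc (0:ℝ) 1) := by
    intro μ hμ
    rcases eq_or_lt_of_le hμ.1 with h0 | h0
    · have key : ContinuousWithinAt p (Set.Ici (0:ℝ)) 0 := by
        apply continuousWithinAt_right_of_monotoneOn_of_image_mem_nhdsWithin hpmono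
          (Icc_mem_nhdsGE zero_lt_one)
        rw [himage, hp0]
        exact Icc_mem_nhdsGE hlt
      rw [← h0]
      exact key.mono Set.Icc_subset_Ici_self
    rcases eq_or_lt_of_le hμ.2 with h1 | h1
    · have key : ContinuousWithinAt p (Set.Iic (1:ℝ)) 1 := by
        apply continuousWithinAt_left_of_monotoneOn_of_image_mem_nhdsWithin hpmono
          (Icc_mem_nhdsLE zero_lt_one)
        rw [himage, hp1]
        exact Icc_mem_nhdsLE hlt
      rw [h1]
      exact key.mono Set.Icc_subset_Iic_self
    · have key : ContinuousAt p μ := by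
        apply continuousAt_of_monotoneOn_of_image_mem_nhds hpmono (Icc_mem_nhds h0 h1)
        rw [himage]
        have h3 := hpinterior μ ⟨h0, h1⟩
        exact Icc_mem_nhds h3.1 h3.2
      exact key.continuousWithinAt
  -- differentiability of p
  have hpd : ∀ μ ∈ Set.Ioo (0:ℝ) 1, HasDerivAt p
      ((deriv RH (p μ) - deriv RL (p μ)) ^ 2 /
        (deriv RL (p μ) * deriv (deriv RH) (p μ) - deriv RH (p μ) * deriv (deriv RL) (p μ))) μ := by
    intro μ hμ
    have hμ' := Set.Ioo_subset_Icc_self hμ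
    have hmem := hpmem μ hμ'
    have hcont : ContinuousAt p μ := (hpcont μ hμ').continuousAt (Icc_mem_nhds hμ.1 hμ.2)
    have hne : (deriv RL (p μ) * deriv (deriv RH) (p μ) - deriv RH (p μ) * deriv (deriv RL) (p μ)) /
        (deriv RH (p μ) - deriv RL (p μ)) ^ 2 ≠ 0 :=
      (div_pos (hNpos _ hmem) (pow_pos (hgpos _ hmem) 2)).ne'
    have hfg : ∀ᶠ y in nhds μ, m (p y) = y := by
      filter_upwards [Ioo_mem_nhds hμ.1 hμ.2] with y hy
      exact hmp y (Set.Ioo_subset_Icc_self hy)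
    have h := HasDerivAt.of_local_left_inverse hcont (hmd (p μ) hmem) hne hfg
    rwa [inv_div] at h
  -- the function T (the derivative of W α, as a function of the price)
  set T : ℝ → ℝ := fun x => α * (CSH x - CSL x) + (1 - α) * (RH x - RL x) -
    α * ((deriv RH x * DL x - deriv RL x * DH x) * (deriv RH x - deriv RL x) /
      (deriv RL x * deriv (deriv RH) x - deriv RH x * deriv (deriv RL) x)) with hTdef
  -- derivative of T
  have hTd : ∀ x ∈ Set.Ioo pLs pHs, HasDerivAt T
      (α * (-(DH x) - -(DL x)) + (1 - α) * (deriv RH x - deriv RL x) -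
        α * ((((deriv (deriv RH) x * DL x + deriv RH x * deriv DL x) -
              (deriv (deriv RL) x * DH x + deriv RL x * deriv DH x)) *
              (deriv RH x - deriv RL x) +
            (deriv RH x * DL x - deriv RL x * DH x) *
              (deriv (deriv RH) x - deriv (deriv RL) x)) *
            (deriv RL x * deriv (deriv RH) x - deriv RH x * deriv (deriv RL) x) -
          (deriv RH x * DL x - deriv RL x * DH x) * (deriv RH x - deriv RL x) *
            ((deriv (deriv RL) x * deriv (deriv RH) x + deriv RL x * deriv (deriv (deriv RH)) x) -
             (deriv (deriv RH) x * deriv (deriv RL) x + deriv RH x * deriv (deriv (deriv RL)) x))) /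
          (deriv RL x * deriv (deriv RH) x - deriv RH x * deriv (deriv RL) x) ^ 2) x := by
    intro x hx
    have hxI : x ∈ I := hIcc (hioo x hx)
    have hNne : deriv RL x * deriv (deriv RH) x - deriv RH x * deriv (deriv RL) x ≠ 0 :=
      (hNpos x (hioo x hx)).ne'
    have hder := ((((hCSH x hxI).sub (hCSL x hxI)).const_mul α).add
        (((hRHd' x hxI).sub (hRLd' x hxI)).const_mul (1 - α))).sub
      ((((((hRH1d x hxI).mul (hDLd x hxI)).sub ((hRL1d x hxI).mul (hDHd x hxI))).mul
            ((hRH1d x hxI).sub (hRL1d x hxI))).div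
          (((hRL1d x hxI).mul (hRH2d x hxI)).sub ((hRH1d x hxI).mul (hRL2d x hxI)))
          hNne).const_mul α)
    refine hder.congr_deriv ?_
    simp only [Pi.add_apply, Pi.sub_apply, Pi.mul_apply, Pi.div_apply]
    ring
  -- nonnegativity of the derivative of T
  have hT'nonneg : ∀ x ∈ Set.Ioo pLs pHs,
      0 ≤ α * (-(DH x) - -(DL x)) + (1 - α) * (deriv RH x - deriv RL x) -
        α * ((((deriv (deriv RH) x * DL x + deriv RH x * deriv DL x) -
              (deriv (deriv RL) x * DH x + deriv RL x * deriv DH x)) *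
              (deriv RH x - deriv RL x) +
            (deriv RH x * DL x - deriv RL x * DH x) *
              (deriv (deriv RH) x - deriv (deriv RL) x)) *
            (deriv RL x * deriv (deriv RH) x - deriv RH x * deriv (deriv RL) x) -
          (deriv RH x * DL x - deriv RL x * DH x) * (deriv RH x - deriv RL x) *
            ((deriv (deriv RL) x * deriv (deriv RH) x + deriv RL x * deriv (deriv (deriv RH)) x) -
             (deriv (deriv RH) x * deriv (deriv RL) x + deriv RH x * deriv (deriv (deriv RL)) x))) /
          (deriv RL x * deriv (deriv RH) x - deriv RH x * deriv (deriv RL) x) ^ 2 := by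
    intro x hx
    have hxI : x ∈ I := hIcc (hioo x hx)
    have hxpos : (0:ℝ) < x := hqpos x (hioo x hx)
    have hg := hgpos x (hioo x hx)
    have hN := hNpos x (hioo x hx)
    have hM := hMnonneg x (hioo x hx)
    have hf := hlevel x hx
    have hg' := hcurv x hx
    have h3L := hRL''' x hx
    have h3H := hRH''' x hx
    have hRL1x := hRL1neg x (hioo x hx) hx.1
    have hRH1x := hRH1pos x (hioo x hx) hx.2
    have h2L := hRL'' x hxI
    have h2H := hRH'' x hxI
    have hDLx := hDLpos x hxI
    have hDHx := hDHpos x hxI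
    -- key identity: x * (RH' DL' - RL' DH') = -M
    have hid : x * (deriv RH x * deriv DL x - deriv RL x * deriv DH x) =
        -(deriv RH x * DL x - deriv RL x * DH x) := by
      rw [hRL1 x hxI, hRH1 x hxI]
      ring
    -- M' ≤ 0
    have hM' : (deriv (deriv RH) x * DL x + deriv RH x * deriv DL x) -
        (deriv (deriv RL) x * DH x + deriv RL x * deriv DH x) ≤ 0 := by
      have h1 : deriv (deriv RH) x * DL x - deriv (deriv RL) x * DH x ≤ 0 := by nlinarith
      have h2 : x * ((deriv (deriv RH) x * DL x + deriv RH x * deriv DL x) -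
          (deriv (deriv RL) x * DH x + deriv RL x * deriv DH x)) ≤ 0 := by
        have h3 := mul_nonpos_of_nonneg_of_nonpos hxpos.le h1
        nlinarith [hid, hM]
      nlinarith [h2, hxpos]
    -- N' ≥ 0
    have hN' : 0 ≤ (deriv (deriv RL) x * deriv (deriv RH) x +
          deriv RL x * deriv (deriv (deriv RH)) x) -
        (deriv (deriv RH) x * deriv (deriv RL) x + deriv RH x * deriv (deriv (deriv RL)) x) := by
      have h1 : 0 ≤ deriv RL x * deriv (deriv (deriv RH)) x := by nlinarith
      have h2 : deriv RH x * deriv (deriv (deriv RL)) x ≤ 0 :=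
        mul_nonpos_of_nonneg_of_nonpos hRH1x.le h3L
      linarith
    -- the numerator of the quotient term is nonpositive
    have hnum : (((deriv (deriv RH) x * DL x + deriv RH x * deriv DL x) -
              (deriv (deriv RL) x * DH x + deriv RL x * deriv DH x)) *
              (deriv RH x - deriv RL x) +
            (deriv RH x * DL x - deriv RL x * DH x) *
              (deriv (deriv RH) x - deriv (deriv RL) x)) *
            (deriv RL x * deriv (deriv RH) x - deriv RH x * deriv (deriv RL) x) -
          (deriv RH x * DL x - deriv RL x * DH x) * (deriv RH x - deriv RL x) *
            ((deriv (deriv RL) x * deriv (deriv RH) x + deriv RL x * deriv (deriv (deriv RH)) x) -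
             (deriv (deriv RH) x * deriv (deriv RL) x + deriv RH x * deriv (deriv (deriv RL)) x))
          ≤ 0 := by
      have hA : (((deriv (deriv RH) x * DL x + deriv RH x * deriv DL x) -
            (deriv (deriv RL) x * DH x + deriv RL x * deriv DH x)) *
            (deriv RH x - deriv RL x) +
          (deriv RH x * DL x - deriv RL x * DH x) *
            (deriv (deriv RH) x - deriv (deriv RL) x)) ≤ 0 := by
        have h1 := mul_nonpos_of_nonpos_of_nonneg hM' hg.le
        have h2 := mul_nonpos_of_nonneg_of_nonpos hM (by linarith : deriv (deriv RH) x - deriv (deriv RL) x ≤ 0)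
        linarith
      have hB := mul_nonpos_of_nonpos_of_nonneg hA hN.le
      have hC : 0 ≤ (deriv RH x * DL x - deriv RL x * DH x) * (deriv RH x - deriv RL x) *
          ((deriv (deriv RL) x * deriv (deriv RH) x + deriv RL x * deriv (deriv (deriv RH)) x) -
           (deriv (deriv RH) x * deriv (deriv RL) x + deriv RH x * deriv (deriv (deriv RL)) x)) :=
        mul_nonneg (mul_nonneg hM hg.le) hN'
      linarith
    have t1 : 0 ≤ α * (-(DH x) - -(DL x)) := mul_nonneg hα0.le (by linarith)
    have t2 : 0 ≤ (1 - α) * (deriv RH x - deriv RL x) := mul_nonneg (by linarith) hg.le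
    have t3 := div_nonpos_of_nonpos_of_nonneg
      (mul_nonpos_of_nonneg_of_nonpos hα0.le hnum)
      (sq_nonneg (deriv RL x * deriv (deriv RH) x - deriv RH x * deriv (deriv RL) x))
    linarith
  -- continuity of T on the closed interval
  have hTcont : ContinuousOn T (Set.Icc pLs pHs) := by
    have c1 : ContinuousOn CSL I := fun q hq => (hCSL q hq).continuousAt.continuousWithinAt
    have c2 : ContinuousOn CSH I := fun q hq => (hCSH q hq).continuousAt.continuousWithinAt
    rw [hTdef]
    apply ContinuousOn.sub
    · apply ContinuousOn.add
      · exact continuousOn_const.mul ((c2.mono hIcc).sub (c1.mono hIcc))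
      · exact continuousOn_const.mul
          (((hRHC3.continuousOn).mono hIcc).sub ((hRLC3.continuousOn).mono hIcc))
    · apply continuousOn_const.mul
      apply ContinuousOn.div
      · exact ((((hRH1C2.continuousOn).mono hIcc).mul ((hDL.continuousOn).mono hIcc)).sub
          (((hRL1C2.continuousOn).mono hIcc).mul ((hDH.continuousOn).mono hIcc))).mul
          (((hRH1C2.continuousOn).mono hIcc).sub ((hRL1C2.continuousOn).mono hIcc))
      · exact (((hRL1C2.continuousOn).mono hIcc).mul ((hRH2C1.continuousOn).mono hIcc)).sub
          (((hRH1C2.continuousOn).mono hIcc).mul ((hRL2C1.continuousOn).mono hIcc))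
      · exact fun q hq => (hNpos q hq).ne'
  -- monotonicity of T
  have hTmono : MonotoneOn T (Set.Icc pLs pHs) := by
    apply monotoneOn_of_deriv_nonneg (convex_Icc _ _) hTcont
    · intro x hx
      rw [interior_Icc] at hx
      exact (hTd x hx).differentiableAt.differentiableWithinAt
    · intro x hx
      rw [interior_Icc] at hx
      rw [(hTd x hx).deriv]
      exact hT'nonneg x hx
  -- derivative of W α
  have hWd : ∀ μ ∈ Set.Ioo (0:ℝ) 1, HasDerivAt (W α) (T (p μ)) μ := by
    intro μ hμ
    have hμ' := Set.Ioo_subset_Icc_self hμ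
    have hmem := hpmem μ hμ'
    have hxI : p μ ∈ I := hIcc hmem
    have hP := hpd μ hμ
    set x := p μ with hxdef
    have h1 : HasDerivAt (fun y => CSL (p y))
        (-(DL x) * ((deriv RH x - deriv RL x) ^ 2 /
          (deriv RL x * deriv (deriv RH) x - deriv RH x * deriv (deriv RL) x))) μ :=
      (hCSL x hxI).comp μ hP
    have h3 : HasDerivAt (fun y => CSH (p y))
        (-(DH x) * ((deriv RH x - deriv RL x) ^ 2 /
          (deriv RL x * deriv (deriv RH) x - deriv RH x * deriv (deriv RL) x))) μ :=
      (hCSH x hxI).comp μ hP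
    have h2 : HasDerivAt (fun y => RL (p y))
        (deriv RL x * ((deriv RH x - deriv RL x) ^ 2 /
          (deriv RL x * deriv (deriv RH) x - deriv RH x * deriv (deriv RL) x))) μ := by
      have h := (hRLd x hxI).comp μ hP
      rwa [← hRL1 x hxI] at h
    have h4 : HasDerivAt (fun y => RH (p y))
        (deriv RH x * ((deriv RH x - deriv RL x) ^ 2 /
          (deriv RL x * deriv (deriv RH) x - deriv RH x * deriv (deriv RL) x))) μ := by
      have h := (hRHd x hxI).comp μ hP
      rwa [← hRH1 x hxI] at h
    have hbig := (((hasDerivAt_const μ (1:ℝ)).sub (hasDerivAt_id μ)).mul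
        ((h1.const_mul α).add (h2.const_mul (1 - α)))).add
      ((hasDerivAt_id μ).mul ((h3.const_mul α).add (h4.const_mul (1 - α))))
    rw [hW]
    refine hbig.congr_deriv ?_
    simp only [Pi.add_apply, Pi.sub_apply, Pi.mul_apply, id_eq]
    have hμeq : μ = -(deriv RL x) / (deriv RH x - deriv RL x) := (hmp μ hμ').symm
    have hgne := (hgpos x hmem).ne'
    have hNne := (hNpos x hmem).ne'
    rw [hTdef]
    simp only [← hxdef]
    rw [hμeq]
    field_simp
    ring
  -- continuity of W α
  have hWcont : ContinuousOn (W α) (Set.Icc (0:ℝ) 1) := by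
    have c1 : ContinuousOn CSL I := fun q hq => (hCSL q hq).continuousAt.continuousWithinAt
    have c2 : ContinuousOn CSH I := fun q hq => (hCSH q hq).continuousAt.continuousWithinAt
    have hmaps : Set.MapsTo p (Set.Icc (0:ℝ) 1) I := fun μ hμ => hIcc (hpmem μ hμ)
    rw [hW]
    apply ContinuousOn.add
    · exact ((continuous_const.sub continuous_id).continuousOn).mul
        ((continuousOn_const.mul (c1.comp hpcont hmaps)).add
          (continuousOn_const.mul ((hRLC3.continuousOn).comp hpcont hmaps)))
    · exact (continuous_id.continuousOn).mul
        ((continuousOn_const.mul (c2.comp hpcont hmaps)).add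
          (continuousOn_const.mul ((hRHC3.continuousOn).comp hpcont hmaps)))
  -- conclusion
  apply MonotoneOn.convexOn_of_deriv (convex_Icc 0 1) hWcont
  · intro μ hμ
    rw [interior_Icc] at hμ
    exact (hWd μ hμ).differentiableAt.differentiableWithinAt
  · intro μ1 h1 μ2 h2 h12
    rw [interior_Icc] at h1 h2
    rw [(hWd μ1 h1).deriv, (hWd μ2 h2).deriv]
    exact hTmono (hpmem μ1 (Set.Ioo_subset_Icc_self h1)) (hpmem μ2 (Set.Ioo_subset_Icc_self h2))
      (hpmono (Set.Ioo_subset_Icc_self h1) (Set.Ioo_subset_Icc_self h2) h12)
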